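/- arXiv:2010.08970 — 3 statements merged into one kernel-verified Lean document; each statement's English description precedes it below -/
import Mathlib

section
/- Suppose G = M₁M₂ with M₁ a closed normal subgroup and M₂ a closed subgroup of the profinite group G. Let χ₁, χ₂ : G → R⁺ and ω₁ : M₁ → R⁺, ω₂ : M₂ → R⁺ be continuous homomorphisms with ω₁ and ω₂ trivial on M₁ ∩ M₂. Then the map ψ(g) = [[1, χ₁(g), ω₁(g₁)+ω₂(g₂)],[0,1,χ₂(g)],[0,0,1]] (where g = g₁g₂, g₁ ∈ M₁, g₂ ∈ M₂) is well-defined, and ψ is a group homomorphism into U_2(R) if and only if for all g = g₁g₂ and g' = g'₁g'₂ with g₁,g'₁ ∈ M₁ and g₂,g'₂ ∈ M₂, one has ω₁(g₂g'₁g₂⁻¹) − ω₁(g'₁) = χ₁(g)·χ₂(g'). -/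
open Matrix

/-- Suppose `G = M₁M₂` with `M₁` a closed normal subgroup and `M₂` a closed subgroup of the
profinite group `G`, and let `χ₁, χ₂ : G → R⁺`, `ω₁ : M₁ → R⁺`, `ω₂ : M₂ → R⁺` be continuous
homomorphisms with `ω₁, ω₂` trivial on `M₁ ∩ M₂`.  Then
`ψ(g) = [[1, χ₁(g), ω₁(g₁)+ω₂(g₂)], [0,1,χ₂(g)], [0,0,1]]` (for `g = g₁g₂`) is well defined,
and `ψ` is a group homomorphism into `U_2(R)` iff
`ω₁(g₂g'₁g₂⁻¹) − ω₁(g'₁) = χ₁(g)·χ₂(g')` for all decompositions `g = g₁g₂`, `g' = g'₁g'₂`. -/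
theorem psi_well_defined_and_hom_iff (R : Type) [CommRing R]
    (G : Type) [Group G] [TopologicalSpace G] [IsTopologicalGroup G]
    [CompactSpace G] [TotallyDisconnectedSpace G] [T2Space G]
    (M₁ M₂ : Subgroup G) (hN : M₁.Normal)
    (hcl₁ : IsClosed (M₁ : Set G)) (hcl₂ : IsClosed (M₂ : Set G))
    (hprod : ∀ g : G, ∃ g₁ ∈ M₁, ∃ g₂ ∈ M₂, g = g₁ * g₂)
    (χ₁ χ₂ : G → R)
    (hχ₁ : ∀ g h, χ₁ (g * h) = χ₁ g + χ₁ h) (hχ₁c : IsLocallyConstant χ₁)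
    (hχ₂ : ∀ g h, χ₂ (g * h) = χ₂ g + χ₂ h) (hχ₂c : IsLocallyConstant χ₂)
    (ω₁ : M₁ → R) (hω₁ : ∀ a b : M₁, ω₁ (a * b) = ω₁ a + ω₁ b)
    (hω₁c : IsLocallyConstant ω₁)
    (ω₂ : M₂ → R) (hω₂ : ∀ a b : M₂, ω₂ (a * b) = ω₂ a + ω₂ b)
    (hω₂c : IsLocallyConstant ω₂)
    (htriv : ∀ g (h1 : g ∈ M₁) (h2 : g ∈ M₂), ω₁ ⟨g, h1⟩ = 0 ∧ ω₂ ⟨g, h2⟩ = 0) :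
    -- well-definedness of `g ↦ ω₁(g₁) + ω₂(g₂)`:
    (∀ (a a' : M₁) (b b' : M₂), (a : G) * b = (a' : G) * b' →
        ω₁ a + ω₂ b = ω₁ a' + ω₂ b') ∧
    -- the homomorphism criterion for ψ:
    (∀ w : G → R, (∀ (a : M₁) (b : M₂), w ((a : G) * b) = ω₁ a + ω₂ b) →
      ((∀ g h : G,
          (!![1, χ₁ (g * h), w (g * h); 0, 1, χ₂ (g * h); 0, 0, 1] :
              Matrix (Fin 3) (Fin 3) R)
            = !![1, χ₁ g, w g; 0, 1, χ₂ g; 0, 0, 1] *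
              !![1, χ₁ h, w h; 0, 1, χ₂ h; 0, 0, 1]) ↔
        ∀ (a a' : M₁) (b b' : M₂),
          ω₁ ⟨(b : G) * a' * (b : G)⁻¹, hN.conj_mem (a' : G) a'.2 (b : G)⟩ - ω₁ a'
            = χ₁ ((a : G) * b) * χ₂ ((a' : G) * b'))) := by
  -- basic facts about ω₁, ω₂
  have hω₁0 : ω₁ 1 = 0 := by
    have h := hω₁ 1 1; simp only [mul_one] at h; linear_combination -h
  have hω₂0 : ω₂ 1 = 0 := by
    have h := hω₂ 1 1; simp only [mul_one] at h; linear_combination -h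
  -- key: matrix equation reduces to a scalar equation
  have key : ∀ (w : G → R) (g h : G),
      ((!![1, χ₁ (g * h), w (g * h); 0, 1, χ₂ (g * h); 0, 0, 1] :
          Matrix (Fin 3) (Fin 3) R)
        = !![1, χ₁ g, w g; 0, 1, χ₂ g; 0, 0, 1] *
          !![1, χ₁ h, w h; 0, 1, χ₂ h; 0, 0, 1]) ↔
      w (g * h) = w g + χ₁ g * χ₂ h + w h := by
    intro w g h
    rw [show (!![1, χ₁ g, w g; 0, 1, χ₂ g; 0, 0, 1] *
          !![1, χ₁ h, w h; 0, 1, χ₂ h; 0, 0, 1] : Matrix (Fin 3) (Fin 3) R)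
        = !![1, χ₁ g + χ₁ h, w g + χ₁ g * χ₂ h + w h;
             0, 1, χ₂ g + χ₂ h; 0, 0, 1] by
      rw [Matrix.mul_fin_three]; congr 1 <;> ring]
    constructor
    · intro hm
      have := congrFun (congrFun hm 0) 2
      simpa using this
    · intro hw
      ext i j
      fin_cases i <;> fin_cases j <;> simp [hχ₁, hχ₂, hw]
  constructor
  · -- well-definedness
    intro a a' b b' hab
    have hxy : ((a'⁻¹ * a : M₁) : G) = ((b' * b⁻¹ : M₂) : G) := by
      push_cast
      rw [inv_mul_eq_iff_eq_mul, eq_comm, ← mul_assoc, mul_inv_eq_iff_eq_mul]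
      exact hab.symm
    have hx2 : ((a'⁻¹ * a : M₁) : G) ∈ M₂ := hxy ▸ (b' * b⁻¹ : M₂).2
    obtain ⟨h1, h2⟩ := htriv ((a'⁻¹ * a : M₁) : G) (a'⁻¹ * a : M₁).2 hx2
    have hx0 : ω₁ (a'⁻¹ * a) = 0 := h1
    have hy0 : ω₂ (b' * b⁻¹) = 0 := by
      have he : (⟨((a'⁻¹ * a : M₁) : G), hx2⟩ : M₂) = b' * b⁻¹ := Subtype.ext hxy
      rw [he] at h2; exact h2
    have e1 : ω₁ a = ω₁ a' + ω₁ (a'⁻¹ * a) := by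
      rw [← hω₁]; congr 1; group
    have e2 : ω₂ b' = ω₂ (b' * b⁻¹) + ω₂ b := by
      rw [← hω₂]; congr 1; group
    rw [e1, e2, hx0, hy0]; ring
  · -- homomorphism criterion
    intro w hw
    constructor
    · intro hm a a' b b'
      set c : M₁ := ⟨(b : G) * a' * (b : G)⁻¹, hN.conj_mem (a' : G) a'.2 (b : G)⟩
        with hcdef
      have harg : (a : G) * b * ((a' : G) * b') = ((a * c : M₁) : G) * ((b * b' : M₂) : G) := by
        push_cast [hcdef]; group
      have h := (key w ((a : G) * b) ((a' : G) * b')).mp (hm _ _)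
      rw [harg, hw (a * c) (b * b'), hw a b, hw a' b', hω₁, hω₂] at h
      linear_combination h
    · intro hcrit g h
      rw [key w g h]
      obtain ⟨g₁, hg₁, g₂, hg₂, hg⟩ := hprod g
      obtain ⟨h₁, hh₁, h₂, hh₂, hh⟩ := hprod h
      set a : M₁ := ⟨g₁, hg₁⟩
      set b : M₂ := ⟨g₂, hg₂⟩
      set a' : M₁ := ⟨h₁, hh₁⟩
      set b' : M₂ := ⟨h₂, hh₂⟩
      set c : M₁ := ⟨(b : G) * a' * (b : G)⁻¹, hN.conj_mem (a' : G) a'.2 (b : G)⟩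
        with hcdef
      have harg : g * h = ((a * c : M₁) : G) * ((b * b' : M₂) : G) := by
        rw [hg, hh]; push_cast [hcdef]; group; rfl
      have hcr := hcrit a a' b b'
      rw [harg, hw (a * c) (b * b'), hg, hh, hw a b, hw a' b', hω₁, hω₂]
      linear_combination hcr
end

section
/- Let G be a profinite group, m ≥ 2, χ₁, χ₂ ∈ H¹(G, Z/m), M₁ = Ker(χ₁), and σ₁ ∈ G with χ₁(σ₁) = 1 and χ₂(σ₁) = 0, so that G is the disjoint union of the cosets M₁σ₁^i, 0 ≤ i ≤ m−1. Let ω : M₁ → Z/m be a continuous homomorphism trivial on σ₁^m. Then the following are equivalent: (a) there exists a continuous homomorphism ρ : G → U_2(Z/m) with ρ_{12} = χ₁, ρ_{23} = χ₂, and ω = Res_{M₁}(ρ_{13}); (d) (σ₁ − 1)ω = Res_{M₁}(χ₂), where ((σ₁−1)ω)(h) = ω(σ₁hσ₁⁻¹) − ω(h) for h ∈ M₁. -/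
open Matrix

/-- An (additive, continuous) 1-cocycle of a topological group with values in `R`. -/
def IsChar {G : Type} [Group G] [TopologicalSpace G] {R : Type} [CommRing R] (χ : G → R) : Prop :=
  (∀ g h, χ (g * h) = χ g + χ h) ∧ IsLocallyConstant χ

theorem isChar_map_one {G : Type} [Group G] [TopologicalSpace G] {R : Type} [CommRing R]
    {χ : G → R} (h : IsChar χ) : χ 1 = 0 := by
  have h1 := h.1 1 1
  rw [one_mul] at h1
  exact left_eq_add.mp h1

theorem isChar_map_inv {G : Type} [Group G] [TopologicalSpace G] {R : Type} [CommRing R]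
    {χ : G → R} (h : IsChar χ) (g : G) : χ g⁻¹ = -χ g := by
  have h1 := h.1 g g⁻¹
  rw [mul_inv_cancel, isChar_map_one h] at h1
  linear_combination -h1

theorem isChar_map_pow {G : Type} [Group G] [TopologicalSpace G] {R : Type} [CommRing R]
    {χ : G → R} (h : IsChar χ) (g : G) (n : ℕ) : χ (g ^ n) = n * χ g := by
  induction n with
  | zero => simpa using isChar_map_one h
  | succ k ih => rw [pow_succ, h.1, ih]; push_cast; ring

/-- Let `G` be profinite, `m ≥ 2`, `χ₁, χ₂ ∈ H¹(G, ℤ/m)`, `M₁ = Ker χ₁`, and `σ₁ ∈ G` with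
`χ₁(σ₁) = 1`, `χ₂(σ₁) = 0`.  Let `ω : M₁ → ℤ/m` be a continuous homomorphism trivial on
`σ₁^m`.  Then the following are equivalent: (a) there is a continuous homomorphism
`ρ : G → U_2(ℤ/m)` with `ρ_{12} = χ₁`, `ρ_{23} = χ₂` and `ω = Res_{M₁}(ρ_{13})`;
(d) `(σ₁ − 1)ω = Res_{M₁}(χ₂)`. -/
theorem lift_iff_sigma_condition (m : ℕ) (hm : 2 ≤ m)
    (G : Type) [Group G] [TopologicalSpace G] [IsTopologicalGroup G]
    [CompactSpace G] [TotallyDisconnectedSpace G] [T2Space G]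
    (χ₁ χ₂ : G → ZMod m) (hχ₁ : IsChar χ₁) (hχ₂ : IsChar χ₂)
    (M₁ : Subgroup G) (hM₁ : ∀ g, g ∈ M₁ ↔ χ₁ g = 0)
    (σ₁ : G) (hσ₁ : χ₁ σ₁ = 1) (hσ₁' : χ₂ σ₁ = 0)
    (ω : M₁ → ZMod m) (hω : ∀ a b : M₁, ω (a * b) = ω a + ω b)
    (hωc : IsLocallyConstant ω)
    (hσm : σ₁ ^ m ∈ M₁) (hωσ : ω ⟨σ₁ ^ m, hσm⟩ = 0) :
    (∃ f : G → ZMod m, IsLocallyConstant f ∧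
        (∀ g (hg : g ∈ M₁), f g = ω ⟨g, hg⟩) ∧
        (∀ g h : G,
          (!![1, χ₁ (g * h), f (g * h); 0, 1, χ₂ (g * h); 0, 0, 1] :
              Matrix (Fin 3) (Fin 3) (ZMod m))
            = !![1, χ₁ g, f g; 0, 1, χ₂ g; 0, 0, 1] *
              !![1, χ₁ h, f h; 0, 1, χ₂ h; 0, 0, 1])) ↔
      (∀ g (hg : g ∈ M₁) (hg' : σ₁ * g * σ₁⁻¹ ∈ M₁),
        ω ⟨σ₁ * g * σ₁⁻¹, hg'⟩ - ω ⟨g, hg⟩ = χ₂ g) := by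
  classical
  haveI : NeZero m := ⟨by omega⟩
  have hval : ∀ x : ZMod m, ((x.val : ℕ) : ZMod m) = x := fun x => ZMod.natCast_rightInverse x
  have hinv1 : ∀ g, χ₁ g⁻¹ = -χ₁ g := isChar_map_inv hχ₁
  have hinv2 : ∀ g, χ₂ g⁻¹ = -χ₂ g := isChar_map_inv hχ₂
  have hpow1 : ∀ g (n : ℕ), χ₁ (g ^ n) = n * χ₁ g := isChar_map_pow hχ₁
  have hpow2 : ∀ g (n : ℕ), χ₂ (g ^ n) = n * χ₂ g := isChar_map_pow hχ₂
  constructor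
  · rintro ⟨f, hfc, hres, hmul⟩ g hg hg'
    have hco : ∀ a b : G, f (a * b) = f a + χ₁ a * χ₂ b + f b := by
      intro a b
      have h02 := congrFun (congrFun (hmul a b) 0) 2
      simp [Matrix.mul_apply, Fin.sum_univ_three] at h02
      linear_combination h02
    have hf1 : f 1 = 0 := by
      have h := hco 1 1
      rw [one_mul, isChar_map_one hχ₁] at h
      have h' : f 1 = f 1 + f 1 := by linear_combination h
      exact left_eq_add.mp h'
    have hfinv : f σ₁⁻¹ = -f σ₁ := by
      have h := hco σ₁ σ₁⁻¹
      rw [mul_inv_cancel, hf1, hinv2, hσ₁'] at h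
      linear_combination -h
    have e1 := hco σ₁ g
    have e2 := hco (σ₁ * g) σ₁⁻¹
    rw [hσ₁] at e1
    rw [hinv2, hσ₁'] at e2
    rw [← hres g hg, ← hres _ hg']
    linear_combination e1 + e2 + hfinv
  · intro hd
    set ωb : G → ZMod m := fun g => if h : g ∈ M₁ then ω ⟨g, h⟩ else 0 with hωb_def
    have hωb_eq : ∀ g (hg : g ∈ M₁), ωb g = ω ⟨g, hg⟩ := fun g hg => dif_pos hg
    have hωb_mul : ∀ a b, a ∈ M₁ → b ∈ M₁ → ωb (a * b) = ωb a + ωb b := by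
      intro a b ha hb
      rw [hωb_eq a ha, hωb_eq b hb, hωb_eq _ (mul_mem ha hb)]
      exact hω ⟨a, ha⟩ ⟨b, hb⟩
    have hω1 : ωb 1 = 0 := by
      have h := hω 1 1
      rw [mul_one] at h
      rw [hωb_eq 1 (one_mem M₁)]
      exact left_eq_add.mp h
    have hωσm : ωb (σ₁ ^ m) = 0 := by rw [hωb_eq _ hσm]; exact hωσ
    have hconj1 : ∀ g (hg : g ∈ M₁), ωb (σ₁ * g * σ₁⁻¹) = ωb g + χ₂ g := by
      intro g hg
      have hg' : σ₁ * g * σ₁⁻¹ ∈ M₁ := by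
        rw [hM₁, hχ₁.1, hχ₁.1, hσ₁, hinv1, hσ₁, (hM₁ g).mp hg]; ring
      have h := hd g hg hg'
      rw [hωb_eq _ hg', hωb_eq _ hg]
      linear_combination h
    have hmempow : ∀ (n : ℕ) g, g ∈ M₁ → σ₁ ^ n * g * σ₁⁻¹ ^ n ∈ M₁ := by
      intro n g hg
      rw [hM₁, hχ₁.1, hχ₁.1, hpow1, hpow1, hinv1, hσ₁, (hM₁ g).mp hg]; ring
    have hconjn : ∀ (n : ℕ) g, g ∈ M₁ → ωb (σ₁ ^ n * g * σ₁⁻¹ ^ n) = ωb g + n * χ₂ g := by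
      intro n
      induction n with
      | zero => intro g hg; simp
      | succ k ih =>
        intro g hg
        have key : σ₁ ^ (k + 1) * g * σ₁⁻¹ ^ (k + 1) =
            σ₁ * (σ₁ ^ k * g * σ₁⁻¹ ^ k) * σ₁⁻¹ := by group
        have hχ₂conj : χ₂ (σ₁ ^ k * g * σ₁⁻¹ ^ k) = χ₂ g := by
          rw [hχ₂.1, hχ₂.1, hpow2, hpow2, hinv2, hσ₁']; ring
        rw [key, hconj1 _ (hmempow k g hg), ih g hg, hχ₂conj]
        push_cast; ring
    have hmemf : ∀ g, g * σ₁⁻¹ ^ (χ₁ g).val ∈ M₁ := by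
      intro g
      rw [hM₁, hχ₁.1, hpow1, hinv1, hσ₁, hval]; ring
    set f : G → ZMod m := fun g => ωb (g * σ₁⁻¹ ^ (χ₁ g).val) with hf_def
    have hfco : ∀ a b : G, f (a * b) = f a + f b + χ₁ a * χ₂ b := by
      intro a b
      set i := (χ₁ a).val with hi
      set j := (χ₁ b).val with hj
      set k := (χ₁ (a * b)).val with hk
      have hi' : i < m := ZMod.val_lt _
      have hj' : j < m := ZMod.val_lt _
      have hkij : k = (i + j) % m := by rw [hk, hχ₁.1, ZMod.val_add]
      have hikey : i + j - k = 0 ∨ i + j - k = m := by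
        rcases Nat.lt_or_ge (i + j) m with h | h
        · left; rw [hkij, Nat.mod_eq_of_lt h]; omega
        · right
          have h2 : (i + j) % m = i + j - m := by
            rw [Nat.mod_eq_sub_mod h, Nat.mod_eq_of_lt (by omega)]
          omega
      have hkle : k ≤ i + j := by rw [hkij]; exact Nat.mod_le _ _
      have hexp : σ₁⁻¹ ^ j * σ₁⁻¹ ^ i * σ₁ ^ (i + j - k) = σ₁⁻¹ ^ k := by
        have ht : i + j = (i + j - k) + k := by omega
        rw [inv_pow, inv_pow, inv_pow, ← _root_.mul_inv_rev, ← pow_add, ht,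
          pow_add, _root_.mul_inv_rev, mul_assoc]
        simp
      have hgrp : (a * b) * σ₁⁻¹ ^ k =
          (a * σ₁⁻¹ ^ i) * (σ₁ ^ i * (b * σ₁⁻¹ ^ j) * σ₁⁻¹ ^ i) * σ₁ ^ (i + j - k) := by
        rw [← hexp]; group
      have ha' := hmemf a
      have hb' := hmemf b
      have hcmem := hmempow i _ hb'
      have htmem : σ₁ ^ (i + j - k) ∈ M₁ := by
        rcases hikey with h | h <;> rw [h]
        · simpa using one_mem M₁
        · exact hσm
      have htzero : ωb (σ₁ ^ (i + j - k)) = 0 := by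
        rcases hikey with h | h
        · rw [h, pow_zero]; exact hω1
        · rw [h]; exact hωσm
      have hχb : χ₂ (b * σ₁⁻¹ ^ j) = χ₂ b := by
        rw [hχ₂.1, hpow2, hinv2, hσ₁']; ring
      have e : f (a * b) = ωb (a * σ₁⁻¹ ^ i) + (ωb (b * σ₁⁻¹ ^ j) + i * χ₂ (b * σ₁⁻¹ ^ j)) + 0 := by
        show ωb ((a * b) * σ₁⁻¹ ^ k) = _
        rw [hgrp, hωb_mul _ _ (mul_mem ha' hcmem) htmem, hωb_mul _ _ ha' hcmem,
          hconjn i _ hb', htzero]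
      rw [e, hχb]
      have hia : ((i : ℕ) : ZMod m) = χ₁ a := by rw [hi]; exact hval _
      simp only [hf_def]
      rw [hia]; ring
    have hωbc_at : ∀ x, ∃ U, IsOpen U ∧ x ∈ U ∧ ∀ y ∈ U, ωb y = ωb x := by
      intro x
      by_cases hx : x ∈ M₁
      · have hopen := hωc {ω ⟨x, hx⟩}
        rw [isOpen_induced_iff] at hopen
        obtain ⟨S, hS, hpre⟩ := hopen
        refine ⟨S ∩ χ₁ ⁻¹' {0}, hS.inter (hχ₁.2 _), ⟨?_, ?_⟩, ?_⟩
        · have : (⟨x, hx⟩ : M₁) ∈ (Subtype.val ⁻¹' S : Set M₁) := by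
            rw [hpre]; exact rfl
          exact this
        · exact (hM₁ x).mp hx
        · rintro y ⟨hyS, hy0⟩
          have hy : y ∈ M₁ := (hM₁ y).mpr hy0
          have : (⟨y, hy⟩ : M₁) ∈ (Subtype.val ⁻¹' S : Set M₁) := hyS
          rw [hpre] at this
          rw [hωb_eq y hy, hωb_eq x hx]
          exact this
      · refine ⟨χ₁ ⁻¹' {χ₁ x}, hχ₁.2 _, rfl, ?_⟩
        intro y hy
        have hy' : y ∉ M₁ := by
          rw [hM₁]
          have : χ₁ y = χ₁ x := hy
          rw [this]
          exact fun h => hx ((hM₁ x).mpr h)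
        show (if h : y ∈ M₁ then ω ⟨y, h⟩ else 0) = (if h : x ∈ M₁ then ω ⟨x, h⟩ else 0)
        rw [dif_neg hy', dif_neg hx]
    have hfc : IsLocallyConstant f := by
      rw [IsLocallyConstant.iff_exists_open]
      intro x
      obtain ⟨U, hU, hxU, hUc⟩ := hωbc_at (x * σ₁⁻¹ ^ (χ₁ x).val)
      refine ⟨χ₁ ⁻¹' {χ₁ x} ∩ (fun g => g * σ₁⁻¹ ^ (χ₁ x).val) ⁻¹' U,
        (hχ₁.2 _).inter (hU.preimage (continuous_mul_right _)), ⟨rfl, hxU⟩, ?_⟩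
      rintro y ⟨hy1, hy2⟩
      have h1 : χ₁ y = χ₁ x := hy1
      simp only [hf_def]
      rw [h1]
      exact hUc _ hy2
    refine ⟨f, hfc, ?_, ?_⟩
    · intro g hg
      have h0 : (χ₁ g).val = 0 := by rw [(hM₁ g).mp hg]; exact ZMod.val_zero
      simp only [hf_def, h0, pow_zero, mul_one]
      exact hωb_eq g hg
    · intro g h
      have hc := hfco g h
      ext i j
      fin_cases i <;> fin_cases j <;>
        simp [Matrix.mul_apply, Fin.sum_univ_three, Matrix.vecHead, Matrix.vecTail, hχ₁.1, hχ₂.1, hc] <;> ring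
end

section
/- In the setting of the preceding statement, if for some z ∈ Z/m the map ψ_z : G → U_2(Z/m) defined by ψ_z(hσ₁^i) = [[1, i, ω(h)+iz],[0,1,χ₂(h)],[0,0,1]] (h ∈ M₁, 0 ≤ i ≤ m−1) is a group homomorphism, then ψ_z is a group homomorphism for every z ∈ Z/m. -/
open Matrix


/-- The map `ψ_z : G → U_2(ℤ/m)`, `ψ_z(hσ₁^i) = [[1, i, ω(h)+iz],[0,1,χ₂(h)],[0,0,1]]`,
expressed via `χ₁` (which records `i`) and a function `w` recording `ω(h)`. -/
def psiZ {m : ℕ} {G : Type} [Group G] (χ₁ χ₂ w : G → ZMod m) (z : ZMod m) (g : G) :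
    Matrix (Fin 3) (Fin 3) (ZMod m) :=
  !![1, χ₁ g, w g + χ₁ g * z; 0, 1, χ₂ g; 0, 0, 1]

private lemma psiZ_hom_iff {m : ℕ} {G : Type} [Group G] (χ₁ χ₂ w : G → ZMod m)
    (h1 : ∀ g h, χ₁ (g*h) = χ₁ g + χ₁ h) (h2 : ∀ g h, χ₂ (g*h) = χ₂ g + χ₂ h)
    (z : ZMod m) (g h : G) :
    psiZ χ₁ χ₂ w z (g * h) = psiZ χ₁ χ₂ w z g * psiZ χ₁ χ₂ w z h ↔
      w (g*h) = w g + w h + χ₁ g * χ₂ h := by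
  simp only [psiZ, Matrix.mul_fin_three, h1, h2]
  rw [← Matrix.ext_iff]
  constructor
  · intro H
    have := H 0 2
    simp at this
    linear_combination this
  · intro H i j
    fin_cases i <;> fin_cases j <;> simp [H] <;> ring

/-- If for some `z ∈ ℤ/m` the map `ψ_z` is a group homomorphism, then `ψ_z` is a group
homomorphism for every `z ∈ ℤ/m`. -/
theorem psiZ_hom_forall_of_exists (m : ℕ) (hm : 2 ≤ m)
    (G : Type) [Group G] [TopologicalSpace G] [IsTopologicalGroup G]
    [CompactSpace G] [TotallyDisconnectedSpace G] [T2Space G]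
    (χ₁ χ₂ : G → ZMod m) (hχ₁ : IsChar χ₁) (hχ₂ : IsChar χ₂)
    (M₁ : Subgroup G) (hM₁ : ∀ g, g ∈ M₁ ↔ χ₁ g = 0)
    (σ₁ : G) (hσ₁ : χ₁ σ₁ = 1) (hσ₁' : χ₂ σ₁ = 0)
    (ω : M₁ → ZMod m) (hω : ∀ a b : M₁, ω (a * b) = ω a + ω b)
    (hωc : IsLocallyConstant ω)
    (hσm : σ₁ ^ m ∈ M₁) (hωσ : ω ⟨σ₁ ^ m, hσm⟩ = 0)
    (w : G → ZMod m)
    (hw : ∀ (a : M₁) (i : ℕ), i < m → w ((a : G) * σ₁ ^ i) = ω a) :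
    (∃ z : ZMod m, ∀ g h : G, psiZ χ₁ χ₂ w z (g * h) = psiZ χ₁ χ₂ w z g * psiZ χ₁ χ₂ w z h) →
      ∀ z : ZMod m, ∀ g h : G,
        psiZ χ₁ χ₂ w z (g * h) = psiZ χ₁ χ₂ w z g * psiZ χ₁ χ₂ w z h := by
  rintro ⟨z₀, hz₀⟩ z g h
  rw [psiZ_hom_iff χ₁ χ₂ w hχ₁.1 hχ₂.1]
  exact (psiZ_hom_iff χ₁ χ₂ w hχ₁.1 hχ₂.1 z₀ g h).mp (hz₀ g h)
end
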